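/- Let A be a free ℤ-set with finitely many orbits. The fully faithful inclusion 𝒞′_A ↪ 𝒞_A admits a right adjoint, which sends an object (B, f) to (f(A), f), where the image f(A) ⊆ B is endowed with the restricted linear order and ℤ-action (this makes f(A) a paracyclic-ordered ℤ-set), and whose counit at (B, f) is given by the subset inclusion f(A) ↪ B. -/

import Mathlib

open CategoryTheory

structure ParacyclicZSet where
  carrier : Type
  [linOrd : LinearOrder carrier]
  [addAction : AddAction ℤ carrier]
  free : ∀ (n : ℤ) (b : carrier), n +ᵥ b = b → n = 0
  finOrbits : Finite (Quotient (AddAction.orbitRel ℤ carrier))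
  lt_one_vadd : ∀ b : carrier, b < (1 : ℤ) +ᵥ b
  one_vadd_mono : Monotone (fun b : carrier => (1 : ℤ) +ᵥ b)
  cofinal : ∀ b b' : carrier, ∃ n : ℤ, b' ≤ n +ᵥ b

attribute [instance] ParacyclicZSet.linOrd ParacyclicZSet.addAction

instance : Category ParacyclicZSet where
  Hom B C := {g : B.carrier → C.carrier //
    (∀ (n : ℤ) (b : B.carrier), g (n +ᵥ b) = n +ᵥ g b) ∧ Monotone g}
  id B := ⟨id, fun _ _ => rfl, monotone_id⟩
  comp f g := ⟨g.1 ∘ f.1, fun n b => by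
      simp only [Function.comp_apply, f.2.1, g.2.1], g.2.2.comp f.2.2⟩
  id_comp f := Subtype.ext rfl
  comp_id f := Subtype.ext rfl
  assoc f g h := Subtype.ext rfl

/-- An object of the category `𝒞_A`: an object `B` of `Λ∞` together with a
`ℤ`-equivariant map `f : A → B`. -/
structure CObj (A : Type) [AddAction ℤ A] where
  B : ParacyclicZSet
  f : A → B.carrier
  equivariant : ∀ (n : ℤ) (a : A), f (n +ᵥ a) = n +ᵥ f a

instance (A : Type) [AddAction ℤ A] : Category (CObj A) where
  Hom x y := {g : x.B ⟶ y.B // g.1 ∘ x.f = y.f}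
  id x := ⟨𝟙 x.B, rfl⟩
  comp {x y z} g h := ⟨g.1 ≫ h.1, by
    show h.1.1 ∘ (g.1.1 ∘ x.f) = z.f
    rw [g.2, h.2]⟩
  id_comp f := Subtype.ext (Category.id_comp f.1)
  comp_id f := Subtype.ext (Category.comp_id f.1)
  assoc f g h := Subtype.ext (Category.assoc f.1 g.1 h.1)

/-- The category `𝒞′_A`: the full subcategory of `𝒞_A` spanned by the `(B, f)` with `f`
surjective. -/
abbrev CSurj (A : Type) [AddAction ℤ A] : Type 1 :=
  CategoryTheory.ObjectProperty.FullSubcategory (fun x : CObj A => Function.Surjective x.f)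

variable {A : Type} [AddAction ℤ A]

theorem range_closed (x : CObj A) (n : ℤ) (b : x.B.carrier) (hb : b ∈ Set.range x.f) :
    n +ᵥ b ∈ Set.range x.f := by
  obtain ⟨a, rfl⟩ := hb
  exact ⟨n +ᵥ a, x.equivariant n a⟩

instance imgAction (x : CObj A) : AddAction ℤ (Set.range x.f) where
  vadd n y := ⟨n +ᵥ y.1, range_closed x n y.1 y.2⟩
  zero_vadd y := Subtype.ext (zero_vadd ℤ y.1)
  add_vadd m n y := Subtype.ext (add_vadd m n y.1)

/-- The image `f(A) ⊆ B`, endowed with the restricted linear order and `ℤ`-action, as a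
paracyclic-ordered `ℤ`-set.  (Finiteness of the set of orbits uses that `A` has finitely
many orbits.) -/
def imageParacyclic (hA : Finite (Quotient (AddAction.orbitRel ℤ A))) (x : CObj A) :
    ParacyclicZSet where
  carrier := Set.range x.f
  free n y h := x.B.free n y.1 (congrArg Subtype.val h)
  finOrbits := by
    have hsurj : Function.Surjective
        (fun q : Quotient (AddAction.orbitRel ℤ A) =>
          (Quotient.map (fun a => (⟨x.f a, ⟨a, rfl⟩⟩ : Set.range x.f))
            (by
              rintro a a' ⟨n, rfl⟩
              exact ⟨n, Subtype.ext (x.equivariant n a').symm⟩) q :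
            Quotient (AddAction.orbitRel ℤ (Set.range x.f)))) := by
      rintro q
      induction q using Quotient.ind with
      | _ y =>
        obtain ⟨b, a, rfl⟩ := y
        exact ⟨Quotient.mk _ a, rfl⟩
    exact Finite.of_surjective _ hsurj
  lt_one_vadd y := by
    have := x.B.lt_one_vadd y.1
    exact Subtype.coe_lt_coe.mp this
  one_vadd_mono y z h := by
    have := x.B.one_vadd_mono (Subtype.coe_le_coe.mpr h)
    exact Subtype.coe_le_coe.mp this
  cofinal y z := by
    obtain ⟨n, hn⟩ := x.B.cofinal y.1 z.1
    exact ⟨n, Subtype.coe_le_coe.mp hn⟩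

/-- The object `(f(A), f)` of `𝒞_A` associated with an object `(B, f)`. -/
def imageObj (hA : Finite (Quotient (AddAction.orbitRel ℤ A))) (x : CObj A) : CObj A where
  B := imageParacyclic hA x
  f a := ⟨x.f a, ⟨a, rfl⟩⟩
  equivariant n a := Subtype.ext (x.equivariant n a)

/-- The subset inclusion `f(A) ↪ B`, as a morphism `(f(A), f) → (B, f)` of `𝒞_A`. -/
def inclHom (hA : Finite (Quotient (AddAction.orbitRel ℤ A))) (x : CObj A) :
    imageObj hA x ⟶ x :=
  ⟨⟨Subtype.val, fun _ _ => rfl, fun _ _ h => h⟩, rfl⟩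

/-- Let `A` be a free `ℤ`-set with finitely many orbits.  The fully faithful inclusion
`𝒞′_A ↪ 𝒞_A` admits a right adjoint sending `(B, f)` to `(f(A), f)` (the image with the
restricted order and `ℤ`-action), with counit given by the subset inclusion `f(A) ↪ B`:
for every `x = (B, f)` in `𝒞_A`, the object `(f(A), f)` lies in `𝒞′_A`, and the inclusion
morphism `inclHom` is universal among morphisms to `x` from objects of `𝒞′_A`.  In
particular the inclusion functor is a left adjoint. -/

lemma mem_range_of_surj {x y : CObj A} (hy : Function.Surjective y.f) (g : y ⟶ x)
    (b : y.B.carrier) : g.1.1 b ∈ Set.range x.f := by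
  obtain ⟨a, rfl⟩ := hy b
  exact ⟨a, (congrFun g.2 a).symm⟩

/-- Restriction of a morphism `y ⟶ x` to a morphism `y ⟶ imageObj hA x`, when `y.f` is
surjective. -/
def restrictHom (hA : Finite (Quotient (AddAction.orbitRel ℤ A))) {x y : CObj A}
    (hy : Function.Surjective y.f) (g : y ⟶ x) : y ⟶ imageObj hA x :=
  ⟨⟨fun b => ⟨g.1.1 b, mem_range_of_surj hy g b⟩,
    fun n b => Subtype.ext (g.1.2.1 n b),
    fun b b' h => g.1.2.2 h⟩,
    funext fun a => Subtype.ext (congrFun g.2 a)⟩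

lemma restrictHom_comp (hA : Finite (Quotient (AddAction.orbitRel ℤ A))) {x y : CObj A}
    (hy : Function.Surjective y.f) (g : y ⟶ x) :
    restrictHom hA hy g ≫ inclHom hA x = g :=
  Subtype.ext (Subtype.ext rfl)

lemma restrictHom_unique (hA : Finite (Quotient (AddAction.orbitRel ℤ A))) {x y : CObj A}
    (hy : Function.Surjective y.f) (g : y ⟶ x) (g' : y ⟶ imageObj hA x)
    (h : g' ≫ inclHom hA x = g) : g' = restrictHom hA hy g := by
  apply Subtype.ext; apply Subtype.ext
  funext b
  exact Subtype.ext (congrFun (congrArg (fun h => h.1.1) h) b)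

lemma imageObj_surj (hA : Finite (Quotient (AddAction.orbitRel ℤ A))) (x : CObj A) :
    Function.Surjective (imageObj hA x).f := by
  rintro ⟨b, a, rfl⟩
  exact ⟨a, rfl⟩

/-- The right adjoint sending `(B, f)` to `(f(A), f)`. -/
def imageFunctor (hA : Finite (Quotient (AddAction.orbitRel ℤ A))) : CObj A ⥤ CSurj A where
  obj x := ⟨imageObj hA x, imageObj_surj hA x⟩
  map {x x'} h := ObjectProperty.homMk (restrictHom hA (imageObj_surj hA x) (inclHom hA x ≫ h))
  map_id x := InducedCategory.hom_ext (Subtype.ext (Subtype.ext (funext fun b => Subtype.ext rfl)))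
  map_comp f g := InducedCategory.hom_ext (Subtype.ext (Subtype.ext (funext fun b => Subtype.ext rfl)))

theorem image_right_adjoint (A : Type) [AddAction ℤ A]
    (hfree : ∀ (n : ℤ) (a : A), n +ᵥ a = a → n = 0)
    (hA : Finite (Quotient (AddAction.orbitRel ℤ A))) :
    (∀ x : CObj A,
      Function.Surjective (imageObj hA x).f ∧
      ∀ y : CObj A, Function.Surjective y.f →
        ∀ g : y ⟶ x, ∃! g' : y ⟶ imageObj hA x, g' ≫ inclHom hA x = g) ∧
    (CategoryTheory.ObjectProperty.ι
        (fun x : CObj A => Function.Surjective x.f)).IsLeftAdjoint := by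

  constructor
  · intro x
    refine ⟨imageObj_surj hA x, fun y hy g => ⟨restrictHom hA hy g,
      restrictHom_comp hA hy g, fun g' h => restrictHom_unique hA hy g g' h⟩⟩
  · refine ⟨⟨imageFunctor hA, ⟨Adjunction.mkOfHomEquiv
      { homEquiv := fun y x =>
          { toFun := fun g => ObjectProperty.homMk (restrictHom hA y.2 g)
            invFun := fun g' => g'.hom ≫ inclHom hA x
            left_inv := fun g => restrictHom_comp hA y.2 g
            right_inv := fun g' => InducedCategory.hom_ext (restrictHom_unique hA y.2 (g'.hom ≫ inclHom hA x) g'.hom rfl).symm }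
        homEquiv_naturality_left_symm := fun f g => Subtype.ext rfl
        homEquiv_naturality_right := fun f g =>
          InducedCategory.hom_ext (Subtype.ext (Subtype.ext (funext fun b => Subtype.ext rfl))) }⟩⟩⟩
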